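/- arXiv:0704.1488 — 7 statements merged into one kernel-verified Lean document; each statement's English description precedes it below -/
import Mathlib

section
/- Let B = (B₁, B₂, B₃) : Ω → ℝ³ be a C² vector field depending only on (x,y), and α : Ω → ℝ a nonvanishing C¹ function of (x,y). If curl B + α B = 0, then B₃ satisfies ΔB₃ - ⟨∇α/α, ∇B₃⟩ + α²B₃ = 0, where Δ and ∇ are taken in the variables (x,y). -/
noncomputable def pdx (f : ℝ × ℝ → ℝ) (p : ℝ × ℝ) : ℝ := fderiv ℝ f p (1, 0)
noncomputable def pdy (f : ℝ × ℝ → ℝ) (p : ℝ × ℝ) : ℝ := fderiv ℝ f p (0, 1)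

lemma pd_diffAt {Ω : Set (ℝ × ℝ)} (hΩ : IsOpen Ω) {f : ℝ × ℝ → ℝ}
    (hf : ContDiffOn ℝ 2 f Ω) (v : ℝ × ℝ) {p : ℝ × ℝ} (hp : p ∈ Ω) :
    DifferentiableAt ℝ (fun q => fderiv ℝ f q v) p := by
  have h1 : ContDiffOn ℝ 1 (fun q => fderiv ℝ f q) Ω :=
    hf.fderiv_of_isOpen hΩ (by norm_num)
  have h2 : ContDiffOn ℝ 1 (fun q => fderiv ℝ f q v) Ω :=
    h1.clm_apply contDiffOn_const
  exact (h2.differentiableOn one_ne_zero).differentiableAt (hΩ.mem_nhds hp)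

lemma fderiv_zero_of_zero_on {Ω : Set (ℝ × ℝ)} (hΩ : IsOpen Ω) {f : ℝ × ℝ → ℝ}
    (hf : ∀ q ∈ Ω, f q = 0) {p : ℝ × ℝ} (hp : p ∈ Ω) (v : ℝ × ℝ) :
    fderiv ℝ f p v = 0 := by
  have h : f =ᶠ[nhds p] (fun _ => (0:ℝ)) :=
    Filter.eventually_of_mem (hΩ.mem_nhds hp) hf
  rw [h.fderiv_eq]
  simp

theorem stmt1 (Ω : Set (ℝ × ℝ)) (hΩopen : IsOpen Ω)
    (B₁ B₂ B₃ : ℝ × ℝ → ℝ) (α : ℝ × ℝ → ℝ)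
    (hB₁ : ContDiffOn ℝ 2 B₁ Ω) (hB₂ : ContDiffOn ℝ 2 B₂ Ω) (hB₃ : ContDiffOn ℝ 2 B₃ Ω)
    (hα : ContDiffOn ℝ 1 α Ω) (hα0 : ∀ p ∈ Ω, α p ≠ 0)
    (heq1 : ∀ p ∈ Ω, pdy B₃ p + α p * B₁ p = 0)
    (heq2 : ∀ p ∈ Ω, -pdx B₃ p + α p * B₂ p = 0)
    (heq3 : ∀ p ∈ Ω, pdx B₂ p - pdy B₁ p + α p * B₃ p = 0) :
    ∀ p ∈ Ω,
      (pdx (pdx B₃) p + pdy (pdy B₃) p)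
        - ((pdx α p / α p) * pdx B₃ p + (pdy α p / α p) * pdy B₃ p)
        + (α p) ^ 2 * B₃ p = 0 := by
  intro p hp
  have hαd : DifferentiableAt ℝ α p :=
    (hα.differentiableOn one_ne_zero).differentiableAt (hΩopen.mem_nhds hp)
  have hB₁d : DifferentiableAt ℝ B₁ p :=
    (hB₁.differentiableOn (by norm_num)).differentiableAt (hΩopen.mem_nhds hp)
  have hB₂d : DifferentiableAt ℝ B₂ p :=
    (hB₂.differentiableOn (by norm_num)).differentiableAt (hΩopen.mem_nhds hp)
  have hB₃d : DifferentiableAt ℝ B₃ p :=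
    (hB₃.differentiableOn (by norm_num)).differentiableAt (hΩopen.mem_nhds hp)
  have hDy : DifferentiableAt ℝ (pdy B₃) p := pd_diffAt hΩopen hB₃ (0,1) hp
  have hDx : DifferentiableAt ℝ (pdx B₃) p := pd_diffAt hΩopen hB₃ (1,0) hp
  -- differentiate heq1 in y
  have E1 : pdy (pdy B₃) p + (α p * pdy B₁ p + B₁ p * pdy α p) = 0 := by
    have h0 : fderiv ℝ (fun q => pdy B₃ q + α q * B₁ q) p (0,1) = 0 :=
      fderiv_zero_of_zero_on hΩopen heq1 hp (0,1)
    rw [fderiv_fun_add (g := fun q => α q * B₁ q) hDy (hαd.mul hB₁d), fderiv_fun_mul hαd hB₁d] at h0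
    simpa [pdx, pdy] using h0
  -- differentiate heq2 in x
  have E2 : -pdx (pdx B₃) p + (α p * pdx B₂ p + B₂ p * pdx α p) = 0 := by
    have h0 : fderiv ℝ (fun q => -pdx B₃ q + α q * B₂ q) p (1,0) = 0 :=
      fderiv_zero_of_zero_on hΩopen heq2 hp (1,0)
    rw [fderiv_fun_add (f := fun q => -pdx B₃ q) (g := fun q => α q * B₂ q) hDx.neg (hαd.mul hB₂d), fderiv_fun_neg, fderiv_fun_mul hαd hB₂d] at h0
    simpa [pdx, pdy] using h0
  have H1 := heq1 p hp
  have H2 := heq2 p hp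
  have H3 := heq3 p hp
  have ha := hα0 p hp
  field_simp
  linear_combination (α p * α p) * H3 - α p * E2 + α p * E1 + pdx α p * H2 - pdy α p * H1
end

section
/- Let α(y) = 1/√(1-y²) on the open unit disk Ω. Then the vector field B₁(x,y) = (xy, 1-y², x√(1-y²)) satisfies curl B₁ + α B₁ = 0 on Ω. -/
/-- the open unit disk in the (x,y)-plane -/
def unitDisk : Set (ℝ × ℝ) := {p : ℝ × ℝ | p.1 ^ 2 + p.2 ^ 2 < 1}

lemma hasDerivAt_s {y : ℝ} (hy : y ^ 2 < 1) :
    HasDerivAt (fun t : ℝ => Real.sqrt (1 - t ^ 2)) (-y / Real.sqrt (1 - y ^ 2)) y := by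
  have h1 : (0:ℝ) < 1 - y ^ 2 := by linarith
  have hg : HasDerivAt (fun t : ℝ => 1 - t ^ 2) (-(2 * y)) y := by
    simpa using ((hasDerivAt_pow 2 y).const_sub 1)
  have hs := (Real.hasStrictDerivAt_sqrt (ne_of_gt h1)).hasDerivAt
  have h := hs.comp y hg
  convert h using 1
  have hsq : Real.sqrt (1 - y ^ 2) ≠ 0 := by positivity
  case e'_9 =>
    field_simp
  all_goals rfl

theorem stmt7 (α B₁ B₂ B₃ : ℝ × ℝ → ℝ)
    (hα : ∀ p : ℝ × ℝ, α p = 1 / Real.sqrt (1 - p.2 ^ 2))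
    (hB₁ : ∀ p : ℝ × ℝ, B₁ p = p.1 * p.2)
    (hB₂ : ∀ p : ℝ × ℝ, B₂ p = 1 - p.2 ^ 2)
    (hB₃ : ∀ p : ℝ × ℝ, B₃ p = p.1 * Real.sqrt (1 - p.2 ^ 2)) :
    ∀ p ∈ unitDisk,
      pdy B₃ p + α p * B₁ p = 0 ∧
      -pdx B₃ p + α p * B₂ p = 0 ∧
      pdx B₂ p - pdy B₁ p + α p * B₃ p = 0 := by
  have hB₁' : B₁ = fun p : ℝ × ℝ => p.1 * p.2 := funext hB₁
  have hB₂' : B₂ = fun p : ℝ × ℝ => 1 - p.2 ^ 2 := funext hB₂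
  have hB₃' : B₃ = fun p : ℝ × ℝ => p.1 * Real.sqrt (1 - p.2 ^ 2) := funext hB₃
  rintro ⟨x, y⟩ hp
  have hy : y ^ 2 < 1 := by
    have := sq_nonneg x
    simp only [unitDisk, Set.mem_setOf_eq] at hp
    linarith
  have h1 : (0:ℝ) < 1 - y ^ 2 := by linarith
  have hsq : Real.sqrt (1 - y ^ 2) ≠ 0 := by positivity
  have hsqsq : Real.sqrt (1 - y ^ 2) * Real.sqrt (1 - y ^ 2) = 1 - y ^ 2 :=
    Real.mul_self_sqrt (le_of_lt h1)
  -- fderiv of B₁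
  have hd1 : HasFDerivAt B₁
      (x • (ContinuousLinearMap.snd ℝ ℝ ℝ) + y • (ContinuousLinearMap.fst ℝ ℝ ℝ)) (x, y) := by
    rw [hB₁']
    exact (hasFDerivAt_fst (𝕜 := ℝ) (p := ((x, y) : ℝ × ℝ))).mul
      (hasFDerivAt_snd (𝕜 := ℝ) (p := ((x, y) : ℝ × ℝ)))
  -- fderiv of B₂
  have hd2 : HasFDerivAt B₂
      (-((2 * y) • ContinuousLinearMap.snd ℝ ℝ ℝ)) (x, y) := by
    rw [hB₂']
    have h := ((hasDerivAt_pow 2 y).const_sub 1).comp_hasFDerivAt (x, y)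
      (hasFDerivAt_snd (𝕜 := ℝ) (p := ((x, y) : ℝ × ℝ)))
    norm_num at h ⊢
    exact h
  -- fderiv of B₃
  have hscomp : HasFDerivAt (fun p : ℝ × ℝ => Real.sqrt (1 - p.2 ^ 2))
      ((-y / Real.sqrt (1 - y ^ 2)) • ContinuousLinearMap.snd ℝ ℝ ℝ) (x, y) :=
    (hasDerivAt_s hy).comp_hasFDerivAt (f := Prod.snd) (x, y)
      (hasFDerivAt_snd (𝕜 := ℝ) (p := ((x, y) : ℝ × ℝ)))
  have hd3 : HasFDerivAt B₃
      (x • ((-y / Real.sqrt (1 - y ^ 2)) • ContinuousLinearMap.snd ℝ ℝ ℝ) +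
        Real.sqrt (1 - y ^ 2) • (ContinuousLinearMap.fst ℝ ℝ ℝ)) (x, y) := by
    rw [hB₃']
    exact (hasFDerivAt_fst (𝕜 := ℝ) (p := ((x, y) : ℝ × ℝ))).mul hscomp
  have e1 : pdy B₃ (x, y) = x * (-y / Real.sqrt (1 - y ^ 2)) := by
    simp [pdy, hd3.fderiv, ContinuousLinearMap.smulRight_apply, smul_eq_mul]
  have e2 : pdx B₃ (x, y) = Real.sqrt (1 - y ^ 2) := by
    simp [pdx, hd3.fderiv, ContinuousLinearMap.smulRight_apply, smul_eq_mul]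
  have e3 : pdx B₂ (x, y) = 0 := by
    simp [pdx, hd2.fderiv, ContinuousLinearMap.smulRight_apply]
  have e4 : pdy B₁ (x, y) = x := by
    simp [pdy, hd1.fderiv, smul_eq_mul]
  refine ⟨?_, ?_, ?_⟩
  · rw [e1, hα, hB₁]
    field_simp
    ring
  · rw [e2, hα, hB₂]
    field_simp
    rw [Real.sq_sqrt h1.le]
    ring
  · rw [e3, e4, hα, hB₃]
    field_simp
    ring
end

section
/- Let α(y) = 1/√(1-y²) on the open unit disk Ω. Then the vector field B₄(x,y) = (2x√(1-y²), -2y√(1-y²), -2xy) satisfies curl B₄ + α B₄ = 0 on Ω. -/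
lemma sqrt_hasFDerivAt (p : ℝ × ℝ) (h : 0 < 1 - p.2 ^ 2) :
    HasFDerivAt (fun q : ℝ × ℝ => Real.sqrt (1 - q.2 ^ 2))
      ((-p.2 / Real.sqrt (1 - p.2 ^ 2)) • ContinuousLinearMap.snd ℝ ℝ ℝ) p := by
  have hg : HasFDerivAt (fun q : ℝ × ℝ => 1 - q.2 ^ 2)
      ((-2 * p.2) • ContinuousLinearMap.snd ℝ ℝ ℝ) p := by
    have h1 : HasFDerivAt (fun q : ℝ × ℝ => q.2 ^ 2)
        ((2 * p.2) • ContinuousLinearMap.snd ℝ ℝ ℝ) p := by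
      have hsnd := hasFDerivAt_snd (𝕜 := ℝ) (E := ℝ) (F := ℝ) (p := p)
      have h0 := hsnd.mul hsnd
      have heq : (fun q : ℝ × ℝ => q.2 ^ 2) = fun q : ℝ × ℝ => q.2 * q.2 := by
        funext q; ring
      rw [heq]
      refine h0.congr_fderiv ?_
      ext v <;> simp <;> ring
    have h2 := (hasFDerivAt_const (1:ℝ) p).sub h1
    refine h2.congr_fderiv ?_
    ext v <;> simp <;> ring
  have hs : HasDerivAt Real.sqrt (1 / (2 * Real.sqrt (1 - p.2 ^ 2))) (1 - p.2 ^ 2) :=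
    Real.hasDerivAt_sqrt h.ne'
  have hc := hs.comp_hasFDerivAt p hg
  refine hc.congr_fderiv ?_
  have hspos : 0 < Real.sqrt (1 - p.2 ^ 2) := Real.sqrt_pos.2 h
  ext v <;> simp <;> field_simp <;> ring

theorem stmt9 (α B₁ B₂ B₃ : ℝ × ℝ → ℝ)
    (hα : ∀ p : ℝ × ℝ, α p = 1 / Real.sqrt (1 - p.2 ^ 2))
    (hB₁ : ∀ p : ℝ × ℝ, B₁ p = 2 * p.1 * Real.sqrt (1 - p.2 ^ 2))
    (hB₂ : ∀ p : ℝ × ℝ, B₂ p = -2 * p.2 * Real.sqrt (1 - p.2 ^ 2))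
    (hB₃ : ∀ p : ℝ × ℝ, B₃ p = -2 * p.1 * p.2) :
    ∀ p ∈ unitDisk,
      pdy B₃ p + α p * B₁ p = 0 ∧
      -pdx B₃ p + α p * B₂ p = 0 ∧
      pdx B₂ p - pdy B₁ p + α p * B₃ p = 0 := by
  have eB₁ : B₁ = fun p : ℝ × ℝ => 2 * p.1 * Real.sqrt (1 - p.2 ^ 2) := funext hB₁
  have eB₂ : B₂ = fun p : ℝ × ℝ => -2 * p.2 * Real.sqrt (1 - p.2 ^ 2) := funext hB₂
  have eB₃ : B₃ = fun p : ℝ × ℝ => -2 * p.1 * p.2 := funext hB₃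
  intro p hp
  have hy2 : p.2 ^ 2 < 1 := by
    have h := hp; simp only [unitDisk, Set.mem_setOf_eq] at h; nlinarith [sq_nonneg p.1]
  have hpos : 0 < 1 - p.2 ^ 2 := by linarith
  have hspos : 0 < Real.sqrt (1 - p.2 ^ 2) := Real.sqrt_pos.2 hpos
  have hsq : Real.sqrt (1 - p.2 ^ 2) ^ 2 = 1 - p.2 ^ 2 := Real.sq_sqrt hpos.le
  have hsnd := hasFDerivAt_snd (𝕜 := ℝ) (E := ℝ) (F := ℝ) (p := p)
  have hfst := hasFDerivAt_fst (𝕜 := ℝ) (E := ℝ) (F := ℝ) (p := p)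
  have hroot := sqrt_hasFDerivAt p hpos
  -- B₃
  have H3 := (hfst.const_mul (-2)).mul hsnd
  have H3 := H3.congr_of_eventuallyEq (f₁ := B₃) (Filter.Eventually.of_forall fun q => by rw [hB₃]; rfl)
  have pd3x : pdx B₃ p = -2 * p.2 := by rw [pdx, H3.fderiv]; simp; ring
  have pd3y : pdy B₃ p = -2 * p.1 := by rw [pdy, H3.fderiv]; simp
  -- B₁
  have H1 := (hfst.const_mul 2).mul hroot
  have H1 := H1.congr_of_eventuallyEq (f₁ := B₁) (Filter.Eventually.of_forall fun q => by rw [hB₁]; rfl)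
  have pd1y : pdy B₁ p = 2 * p.1 * (-p.2 / Real.sqrt (1 - p.2 ^ 2)) := by
    rw [pdy, H1.fderiv]; simp
  -- B₂
  have H2 := (hsnd.const_mul (-2)).mul hroot
  have H2 := H2.congr_of_eventuallyEq (f₁ := B₂) (Filter.Eventually.of_forall fun q => by rw [hB₂]; rfl)
  have pd2x : pdx B₂ p = 0 := by rw [pdx, H2.fderiv]; simp
  refine ⟨?_, ?_, ?_⟩
  · rw [pd3y, hα, hB₁]; field_simp; ring
  · rw [pd3x, hα, hB₂]; field_simp; all_goals ring
  · rw [pd2x, pd1y, hα, hB₃]; field_simp; all_goals ring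
end

section
/- Let α(y) = 1/√(1-y²) on the open unit disk Ω. Then the vector field B₃ with components B₃¹ = (3/4)√(1-y²) arcsin y + y(x² - (3/4)y² + 5/4), B₃² = 2x(1-y²), B₃³ = √(1-y²)(x² - (1/4)y²) - (3/4)y arcsin y, satisfies curl B₃ + α B₃ = 0 on Ω. -/
theorem stmt10 (α B₁ B₂ B₃ : ℝ × ℝ → ℝ)
    (hα : ∀ p : ℝ × ℝ, α p = 1 / Real.sqrt (1 - p.2 ^ 2))
    (hB₁ : ∀ p : ℝ × ℝ, B₁ p = (3 / 4) * Real.sqrt (1 - p.2 ^ 2) * Real.arcsin p.2 + p.2 * (p.1 ^ 2 - (3 / 4) * p.2 ^ 2 + 5 / 4))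
    (hB₂ : ∀ p : ℝ × ℝ, B₂ p = 2 * p.1 * (1 - p.2 ^ 2))
    (hB₃ : ∀ p : ℝ × ℝ, B₃ p = Real.sqrt (1 - p.2 ^ 2) * (p.1 ^ 2 - (1 / 4) * p.2 ^ 2) - (3 / 4) * p.2 * Real.arcsin p.2) :
    ∀ p ∈ unitDisk,
      pdy B₃ p + α p * B₁ p = 0 ∧
      -pdx B₃ p + α p * B₂ p = 0 ∧
      pdx B₂ p - pdy B₁ p + α p * B₃ p = 0 := by
  have hB₁' : B₁ = fun p : ℝ × ℝ => (3 / 4) * Real.sqrt (1 - p.2 ^ 2) * Real.arcsin p.2 + p.2 * (p.1 ^ 2 - (3 / 4) * p.2 ^ 2 + 5 / 4) := funext hB₁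
  have hB₂' : B₂ = fun p : ℝ × ℝ => 2 * p.1 * (1 - p.2 ^ 2) := funext hB₂
  have hB₃' : B₃ = fun p : ℝ × ℝ => Real.sqrt (1 - p.2 ^ 2) * (p.1 ^ 2 - (1 / 4) * p.2 ^ 2) - (3 / 4) * p.2 * Real.arcsin p.2 := funext hB₃
  subst hB₁' hB₂' hB₃'
  intro p hp
  have hy2 : p.2 ^ 2 < 1 := lt_of_le_of_lt (by nlinarith [sq_nonneg p.1]) hp
  have hq : (0:ℝ) < 1 - p.2 ^ 2 := by linarith
  have hqne : (1:ℝ) - p.2 ^ 2 ≠ 0 := ne_of_gt hq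
  have hspos : 0 < Real.sqrt (1 - p.2 ^ 2) := Real.sqrt_pos.2 hq
  have hsne : Real.sqrt (1 - p.2 ^ 2) ≠ 0 := ne_of_gt hspos
  have hsq : Real.sqrt (1 - p.2 ^ 2) ^ 2 = 1 - p.2 ^ 2 := Real.sq_sqrt (le_of_lt hq)
  have hyabs : |p.2| < 1 := abs_lt.2 ⟨by nlinarith, by nlinarith⟩
  have hy1 : p.2 ≠ 1 := ne_of_lt (lt_of_abs_lt hyabs)
  have hym1 : p.2 ≠ -1 := ne_of_gt (neg_lt_of_abs_lt hyabs)
  -- basic derivative building blocks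
  have hfst : HasFDerivAt (fun p : ℝ × ℝ => p.1) (ContinuousLinearMap.fst ℝ ℝ ℝ) p := hasFDerivAt_fst
  have hsnd : HasFDerivAt (fun p : ℝ × ℝ => p.2) (ContinuousLinearMap.snd ℝ ℝ ℝ) p := hasFDerivAt_snd
  have hfst2 : HasFDerivAt (fun p : ℝ × ℝ => p.1 ^ 2)
      (p.1 • ContinuousLinearMap.fst ℝ ℝ ℝ + p.1 • ContinuousLinearMap.fst ℝ ℝ ℝ) p := by
    simpa [pow_two] using hfst.fun_mul hfst
  have hsnd2 : HasFDerivAt (fun p : ℝ × ℝ => p.2 ^ 2)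
      (p.2 • ContinuousLinearMap.snd ℝ ℝ ℝ + p.2 • ContinuousLinearMap.snd ℝ ℝ ℝ) p := by
    simpa [pow_two] using hsnd.fun_mul hsnd
  have hQ : HasFDerivAt (fun p : ℝ × ℝ => 1 - p.2 ^ 2) _ p := (hasFDerivAt_const (1:ℝ) p).sub hsnd2
  have hS : HasFDerivAt (fun p : ℝ × ℝ => Real.sqrt (1 - p.2 ^ 2)) _ p :=
    (Real.hasDerivAt_sqrt hqne).comp_hasFDerivAt p hQ
  have hA : HasFDerivAt (fun p : ℝ × ℝ => Real.arcsin p.2) _ p :=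
    (Real.hasDerivAt_arcsin hym1 hy1).comp_hasFDerivAt p hsnd
  have hd1 := ((hS.const_mul (3/4 : ℝ)).fun_mul hA).fun_add (hsnd.fun_mul ((hfst2.fun_sub (hsnd2.const_mul (3/4:ℝ))).add_const (5/4:ℝ)))
  have hd2 := (hfst.const_mul (2:ℝ)).fun_mul hQ
  have hd3 := (hS.fun_mul (hfst2.fun_sub (hsnd2.const_mul (1/4:ℝ)))).fun_sub ((hsnd.const_mul (3/4:ℝ)).fun_mul hA)
  have g : Real.sqrt (1 - p.2 ^ 2) * (Real.sqrt (1 - p.2 ^ 2))⁻¹ = 1 := mul_inv_cancel₀ hsne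
  refine ⟨?_, ?_, ?_⟩
  · simp only [pdy]; rw [hd3.fderiv, hα]
    simp
    linear_combination (-(Real.sqrt (1 - p.2 ^ 2))⁻¹ * p.2 / 2) * hsq
      + (p.2 * Real.sqrt (1 - p.2 ^ 2) / 2 + 3/4 * Real.arcsin p.2) * g
  · simp only [pdx]; rw [hd3.fderiv, hα]
    simp
    linear_combination (2 * p.1 * Real.sqrt (1 - p.2 ^ 2)) * g
      + (-(2 * p.1 * (Real.sqrt (1 - p.2 ^ 2))⁻¹)) * hsq
  · simp only [pdx, pdy]; rw [hd2.fderiv, hd1.fderiv, hα]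
    simp
    linear_combination (p.1 ^ 2 - p.2 ^ 2 / 4 - 3/4) * g
end

section
/- Let α(y) = 1/√(1-y²) on the open unit disk Ω. The function u(x,y) = √(1-y²)(x² - y²/4) - (3/4) y arcsin y satisfies div((1/α)∇u) + αu = 0 on Ω, i.e., div(√(1-y²) ∇u) + u/√(1-y²) = 0. -/
open Real ContinuousLinearMap

lemma hSd {y:ℝ} (hy : y^2 < 1) :
    HasDerivAt (fun t => Real.sqrt (1-t^2)) (-y / Real.sqrt (1-y^2)) y := by
  have h1 : (0:ℝ) < 1-y^2 := by nlinarith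
  have hin : HasDerivAt (fun t : ℝ => 1 - t^2) (-(2*y^1)) y :=
    (hasDerivAt_pow 2 y).const_sub 1
  have := (Real.hasDerivAt_sqrt h1.ne').comp y hin
  have hs : Real.sqrt (1-y^2) ≠ 0 := by rw [Real.sqrt_ne_zero']; exact h1
  refine this.congr_deriv ?_
  field_simp

section aux
variable {q : ℝ × ℝ}

lemma hsq1 (hq : q.2^2 < 1) :
    HasFDerivAt (fun q : ℝ×ℝ => Real.sqrt (1 - q.2^2))
      ((-q.2 / Real.sqrt (1-q.2^2)) • snd ℝ ℝ ℝ) q :=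
  (hSd hq).comp_hasFDerivAt q hasFDerivAt_snd

lemma harc1 (hq : q.2^2 < 1) :
    HasFDerivAt (fun q : ℝ×ℝ => Real.arcsin q.2)
      ((1 / Real.sqrt (1-q.2^2)) • snd ℝ ℝ ℝ) q := by
  have h1 : q.2 ≠ -1 := by intro h; rw [h] at hq; norm_num at hq
  have h2 : q.2 ≠ 1 := by intro h; rw [h] at hq; norm_num at hq
  exact (Real.hasDerivAt_arcsin h1 h2).comp_hasFDerivAt q hasFDerivAt_snd

lemma hX2 : HasFDerivAt (fun q : ℝ×ℝ => q.1^2)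
    (q.1 • fst ℝ ℝ ℝ + q.1 • fst ℝ ℝ ℝ) q := by
  have := (hasFDerivAt_fst (p := q) (𝕜 := ℝ) (E := ℝ) (F := ℝ)).mul hasFDerivAt_fst
  simpa only [pow_two, Pi.mul_def] using this

lemma hY2 : HasFDerivAt (fun q : ℝ×ℝ => q.2^2)
    (q.2 • snd ℝ ℝ ℝ + q.2 • snd ℝ ℝ ℝ) q := by
  have := (hasFDerivAt_snd (p := q) (𝕜 := ℝ) (E := ℝ) (F := ℝ)).mul hasFDerivAt_snd
  simpa only [pow_two, Pi.mul_def] using this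

lemma hq4der : HasFDerivAt (fun q : ℝ×ℝ => q.1 ^ 2 - q.2 ^ 2 / 4)
    ((q.1 • fst ℝ ℝ ℝ + q.1 • fst ℝ ℝ ℝ)
      - (4:ℝ)⁻¹ • (q.2 • snd ℝ ℝ ℝ + q.2 • snd ℝ ℝ ℝ)) q := by
  have := hX2.sub ((hY2 (q := q)).const_mul ((4:ℝ)⁻¹))
  refine this.congr_of_eventuallyEq (Filter.Eventually.of_forall fun r => ?_)
  simp only [Pi.sub_apply]
  ring

lemma hUder (hq : q.2^2 < 1) :
    HasFDerivAt (fun q : ℝ×ℝ =>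
        Real.sqrt (1 - q.2 ^ 2) * (q.1 ^ 2 - q.2 ^ 2 / 4) - 3 / 4 * q.2 * Real.arcsin q.2)
      (Real.sqrt (1 - q.2^2) • ((q.1 • fst ℝ ℝ ℝ + q.1 • fst ℝ ℝ ℝ)
          - (4:ℝ)⁻¹ • (q.2 • snd ℝ ℝ ℝ + q.2 • snd ℝ ℝ ℝ))
        + (q.1 ^ 2 - q.2 ^ 2 / 4) • ((-q.2 / Real.sqrt (1-q.2^2)) • snd ℝ ℝ ℝ)
       - ((3 / 4 * q.2) • ((1 / Real.sqrt (1-q.2^2)) • snd ℝ ℝ ℝ)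
        + Real.arcsin q.2 • ((3/4 : ℝ) • snd ℝ ℝ ℝ))) q := by
  have ha : HasFDerivAt (fun q : ℝ×ℝ => 3 / 4 * q.2) ((3/4 : ℝ) • snd ℝ ℝ ℝ) q :=
    (hasFDerivAt_snd).const_mul (3/4 : ℝ)
  exact ((hsq1 hq).mul hq4der).sub (ha.mul (harc1 hq))

lemma pdx_u (hq : q.2^2 < 1) :
    pdx (fun q : ℝ×ℝ =>
        Real.sqrt (1 - q.2 ^ 2) * (q.1 ^ 2 - q.2 ^ 2 / 4) - 3 / 4 * q.2 * Real.arcsin q.2) q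
      = Real.sqrt (1 - q.2^2) * (2 * q.1) := by
  rw [pdx, (hUder hq).fderiv]
  simp only [ContinuousLinearMap.add_apply, ContinuousLinearMap.sub_apply,
    ContinuousLinearMap.smul_apply, ContinuousLinearMap.coe_smul', Pi.smul_apply,
    ContinuousLinearMap.coe_fst', ContinuousLinearMap.coe_snd', smul_eq_mul]
  ring

lemma pdy_u (hq : q.2^2 < 1) :
    pdy (fun q : ℝ×ℝ =>
        Real.sqrt (1 - q.2 ^ 2) * (q.1 ^ 2 - q.2 ^ 2 / 4) - 3 / 4 * q.2 * Real.arcsin q.2) q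
      = (-q.2 / Real.sqrt (1-q.2^2)) * (q.1 ^ 2 - q.2 ^ 2 / 4)
        - Real.sqrt (1 - q.2^2) * (q.2 / 2)
        - 3/4 * Real.arcsin q.2 - 3/4 * q.2 / Real.sqrt (1-q.2^2) := by
  rw [pdy, (hUder hq).fderiv]
  simp only [ContinuousLinearMap.add_apply, ContinuousLinearMap.sub_apply,
    ContinuousLinearMap.smul_apply, ContinuousLinearMap.coe_smul', Pi.smul_apply,
    ContinuousLinearMap.coe_fst', ContinuousLinearMap.coe_snd', smul_eq_mul]
  ring

end aux

theorem stmt11 (u : ℝ × ℝ → ℝ)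
    (hu : ∀ p : ℝ × ℝ, u p = Real.sqrt (1 - p.2 ^ 2) * (p.1 ^ 2 - p.2 ^ 2 / 4) - (3 / 4) * p.2 * Real.arcsin p.2) :
    ∀ p ∈ unitDisk,
      pdx (fun q => Real.sqrt (1 - q.2 ^ 2) * pdx u q) p
        + pdy (fun q => Real.sqrt (1 - q.2 ^ 2) * pdy u q) p
        + u p / Real.sqrt (1 - p.2 ^ 2) = 0 := by
  have hu' : u = fun p : ℝ×ℝ =>
      Real.sqrt (1 - p.2 ^ 2) * (p.1 ^ 2 - p.2 ^ 2 / 4) - 3 / 4 * p.2 * Real.arcsin p.2 := by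
    funext p; simpa using hu p
  subst hu'
  intro p hp
  have hy : p.2^2 < 1 := by
    have h := hp; simp only [unitDisk, Set.mem_setOf_eq] at h
    nlinarith [sq_nonneg p.1]
  have hopen : IsOpen {q : ℝ×ℝ | q.2^2 < 1} :=
    isOpen_lt (by fun_prop) continuous_const
  have hmem : {q : ℝ×ℝ | q.2^2 < 1} ∈ nhds p := hopen.mem_nhds hy
  have h1pos : (0:ℝ) < 1 - p.2^2 := by nlinarith
  have hsne : Real.sqrt (1 - p.2^2) ≠ 0 := by rw [Real.sqrt_ne_zero']; exact h1pos
  have hss : Real.sqrt (1 - p.2^2) ^ 2 = 1 - p.2^2 := Real.sq_sqrt h1pos.le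
  -- x-part
  have heq1 : (fun q : ℝ×ℝ => Real.sqrt (1 - q.2 ^ 2) *
      pdx (fun q : ℝ×ℝ => Real.sqrt (1 - q.2 ^ 2) * (q.1 ^ 2 - q.2 ^ 2 / 4)
        - 3 / 4 * q.2 * Real.arcsin q.2) q)
      =ᶠ[nhds p] (fun q : ℝ×ℝ => 2 * q.1 * (1 - q.2^2)) := by
    filter_upwards [hmem] with q hq
    rw [pdx_u hq]
    have hss' : Real.sqrt (1 - q.2^2) ^ 2 = 1 - q.2^2 := Real.sq_sqrt (by nlinarith)
    linear_combination 2 * q.1 * hss'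
  have hF : HasFDerivAt (fun q : ℝ×ℝ => 2 * q.1 * (1 - q.2^2))
      ((2 * p.1) • (-(p.2 • snd ℝ ℝ ℝ + p.2 • snd ℝ ℝ ℝ))
        + (1 - p.2^2) • ((2:ℝ) • fst ℝ ℝ ℝ)) p := by
    have h2x : HasFDerivAt (fun q : ℝ×ℝ => 2 * q.1) ((2:ℝ) • fst ℝ ℝ ℝ) p :=
      (hasFDerivAt_fst).const_mul (2:ℝ)
    have hc : HasFDerivAt (fun q : ℝ×ℝ => 1 - q.2^2)
        (-(p.2 • snd ℝ ℝ ℝ + p.2 • snd ℝ ℝ ℝ)) p := hY2.const_sub 1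
    exact h2x.mul hc
  have hxval : pdx (fun q : ℝ×ℝ => Real.sqrt (1 - q.2 ^ 2) *
      pdx (fun q : ℝ×ℝ => Real.sqrt (1 - q.2 ^ 2) * (q.1 ^ 2 - q.2 ^ 2 / 4)
        - 3 / 4 * q.2 * Real.arcsin q.2) q) p = 2 * (1 - p.2^2) := by
    rw [pdx, heq1.fderiv_eq, hF.fderiv]
    simp only [ContinuousLinearMap.add_apply, ContinuousLinearMap.sub_apply,
      ContinuousLinearMap.neg_apply, ContinuousLinearMap.smul_apply,
      ContinuousLinearMap.coe_smul', Pi.smul_apply,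
      ContinuousLinearMap.coe_fst', ContinuousLinearMap.coe_snd', smul_eq_mul]
    ring
  -- y-part
  have heq2 : (fun q : ℝ×ℝ => Real.sqrt (1 - q.2 ^ 2) *
      pdy (fun q : ℝ×ℝ => Real.sqrt (1 - q.2 ^ 2) * (q.1 ^ 2 - q.2 ^ 2 / 4)
        - 3 / 4 * q.2 * Real.arcsin q.2) q)
      =ᶠ[nhds p] (fun q : ℝ×ℝ => -q.2 * (q.1^2 - q.2^2/4) - q.2/2 * (1 - q.2^2)
        - 3/4 * (Real.sqrt (1 - q.2^2) * Real.arcsin q.2) - 3/4 * q.2) := by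
    filter_upwards [hmem] with q hq
    rw [pdy_u hq]
    have h1q : (0:ℝ) < 1 - q.2^2 := by nlinarith
    have hsq : Real.sqrt (1 - q.2^2) ≠ 0 := by rw [Real.sqrt_ne_zero']; exact h1q
    have hss' : Real.sqrt (1 - q.2^2) ^ 2 = 1 - q.2^2 := Real.sq_sqrt h1q.le
    have h1 : Real.sqrt (1-q.2^2) * (-q.2/Real.sqrt (1-q.2^2)) = -q.2 := by
      field_simp
    have h2 : Real.sqrt (1-q.2^2) * (3/4*q.2/Real.sqrt (1-q.2^2)) = 3/4*q.2 := by
      field_simp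
    linear_combination (q.1^2 - q.2^2/4) * h1 - q.2/2 * hss' - h2
  have hG : HasFDerivAt (fun q : ℝ×ℝ => -q.2 * (q.1^2 - q.2^2/4) - q.2/2 * (1 - q.2^2)
        - 3/4 * (Real.sqrt (1 - q.2^2) * Real.arcsin q.2) - 3/4 * q.2)
      ((-p.2) • ((p.1 • fst ℝ ℝ ℝ + p.1 • fst ℝ ℝ ℝ)
            - (4:ℝ)⁻¹ • (p.2 • snd ℝ ℝ ℝ + p.2 • snd ℝ ℝ ℝ))
          + (p.1^2 - p.2^2/4) • (-(snd ℝ ℝ ℝ))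
        - ((p.2/2) • (-(p.2 • snd ℝ ℝ ℝ + p.2 • snd ℝ ℝ ℝ))
          + (1 - p.2^2) • ((2:ℝ)⁻¹ • snd ℝ ℝ ℝ))
        - (3/4 : ℝ) • (Real.sqrt (1 - p.2^2) • ((1 / Real.sqrt (1-p.2^2)) • snd ℝ ℝ ℝ)
          + Real.arcsin p.2 • ((-p.2 / Real.sqrt (1-p.2^2)) • snd ℝ ℝ ℝ))
        - (3/4 : ℝ) • snd ℝ ℝ ℝ) p := by
    have hny : HasFDerivAt (fun q : ℝ×ℝ => -q.2) (-(snd ℝ ℝ ℝ)) p := hasFDerivAt_snd.neg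
    have hy2 : HasFDerivAt (fun q : ℝ×ℝ => q.2/2) ((2:ℝ)⁻¹ • snd ℝ ℝ ℝ) p := by
      have := (hasFDerivAt_snd (p := p) (𝕜 := ℝ) (E := ℝ) (F := ℝ)).const_mul ((2:ℝ)⁻¹)
      refine this.congr_of_eventuallyEq (Filter.Eventually.of_forall fun r => ?_)
      ring
    have harcs : HasFDerivAt (fun q : ℝ×ℝ => Real.sqrt (1 - q.2^2) * Real.arcsin q.2)
        (Real.sqrt (1 - p.2^2) • ((1 / Real.sqrt (1-p.2^2)) • snd ℝ ℝ ℝ)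
          + Real.arcsin p.2 • ((-p.2 / Real.sqrt (1-p.2^2)) • snd ℝ ℝ ℝ)) p :=
      (hsq1 hy).mul (harc1 hy)
    exact (((hny.mul hq4der).sub (hy2.mul (hY2.const_sub 1))).sub
      (harcs.const_mul (3/4 : ℝ))).sub ((hasFDerivAt_snd).const_mul (3/4 : ℝ))
  have hyval : pdy (fun q : ℝ×ℝ => Real.sqrt (1 - q.2 ^ 2) *
      pdy (fun q : ℝ×ℝ => Real.sqrt (1 - q.2 ^ 2) * (q.1 ^ 2 - q.2 ^ 2 / 4)
        - 3 / 4 * q.2 * Real.arcsin q.2) q) p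
      = -(p.1^2) + (9/4) * p.2^2 - 2 + (3/4) * p.2 * Real.arcsin p.2 / Real.sqrt (1 - p.2^2) := by
    rw [pdy, heq2.fderiv_eq, hG.fderiv]
    simp only [ContinuousLinearMap.add_apply, ContinuousLinearMap.sub_apply,
      ContinuousLinearMap.neg_apply, ContinuousLinearMap.smul_apply,
      ContinuousLinearMap.coe_smul', Pi.smul_apply,
      ContinuousLinearMap.coe_fst', ContinuousLinearMap.coe_snd', smul_eq_mul]
    have h3 : Real.sqrt (1 - p.2^2) * (1 / Real.sqrt (1-p.2^2)) = 1 := by field_simp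
    field_simp
    ring
  rw [hxval, hyval]
  field_simp
  ring
end

section
/- Let p, q, u₀ : Ω → ℝ with Ω ⊂ ℝ² open, p positive C², u₀ a positive C² solution of div(p ∇u₀) + q u₀ = 0, and set f = √p · u₀. If W : Ω → ℂ is a C¹ solution of the Vekua equation ∂_z̄ W = (∂_z̄ f / f) · conj(W), then u = (1/√p) Re W is a solution of div(p ∇u) + qu = 0. -/
noncomputable section
namespace Vekua

/-- directional partial derivative -/
def pd {F : Type*} [NormedAddCommGroup F] [NormedSpace ℝ F]
    (e : ℝ × ℝ) (f : ℝ × ℝ → F) (p : ℝ × ℝ) : F := fderiv ℝ f p e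

variable {F : Type*} [NormedAddCommGroup F] [NormedSpace ℝ F]

lemma pd_congr {f g : ℝ × ℝ → F} {p : ℝ × ℝ} (e : ℝ × ℝ) (h : f =ᶠ[nhds p] g) :
    pd e f p = pd e g p := by unfold pd; rw [h.fderiv_eq]

lemma contDiffAt_pd {f : ℝ × ℝ → F} {p : ℝ × ℝ} (hf : ContDiffAt ℝ 2 f p) (e : ℝ × ℝ) :
    ContDiffAt ℝ 1 (pd e f) p := by
  have h1 : ContDiffAt ℝ 1 (fderiv ℝ f) p := hf.fderiv_right (by norm_num)
  exact (ContinuousLinearMap.apply ℝ F e).contDiff.contDiffAt.comp p h1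

lemma differentiableAt_pd {f : ℝ × ℝ → F} {p : ℝ × ℝ} (hf : ContDiffAt ℝ 2 f p) (e : ℝ × ℝ) :
    DifferentiableAt ℝ (pd e f) p :=
  (contDiffAt_pd hf e).differentiableAt one_ne_zero

lemma pd_comm {f : ℝ × ℝ → F} {p : ℝ × ℝ} (hf : ContDiffAt ℝ 2 f p) (e₁ e₂ : ℝ × ℝ) :
    pd e₂ (pd e₁ f) p = pd e₁ (pd e₂ f) p := by
  have hsymm : IsSymmSndFDerivAt ℝ f p := hf.isSymmSndFDerivAt (by norm_num)
  have hd : DifferentiableAt ℝ (fderiv ℝ f) p :=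
    (hf.fderiv_right (m := 1) (by norm_num)).differentiableAt one_ne_zero
  have key : ∀ a b : ℝ × ℝ, pd b (pd a f) p = fderiv ℝ (fderiv ℝ f) p b a := by
    intro a b
    have h1 : pd a f = fun q => (ContinuousLinearMap.apply ℝ F a) (fderiv ℝ f q) := rfl
    have h2 : (fun q => (ContinuousLinearMap.apply ℝ F a) (fderiv ℝ f q))
        = ⇑(ContinuousLinearMap.apply ℝ F a) ∘ fderiv ℝ f := rfl
    rw [h1, pd, h2,
      ((ContinuousLinearMap.apply ℝ F a).hasFDerivAt.comp p hd.hasFDerivAt).fderiv]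
    rfl
  rw [key e₁ e₂, key e₂ e₁, hsymm]

variable {𝔸 : Type*} [NormedCommRing 𝔸] [NormedAlgebra ℝ 𝔸]

lemma pd_mul {a b : ℝ × ℝ → 𝔸} {p : ℝ × ℝ} (e : ℝ × ℝ)
    (ha : DifferentiableAt ℝ a p) (hb : DifferentiableAt ℝ b p) :
    pd e (fun q => a q * b q) p = pd e a p * b p + a p * pd e b p := by
  unfold pd
  rw [fderiv_fun_mul ha hb]
  simp [smul_eq_mul]
  ring

lemma pd_add {a b : ℝ × ℝ → F} {p : ℝ × ℝ} (e : ℝ × ℝ)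
    (ha : DifferentiableAt ℝ a p) (hb : DifferentiableAt ℝ b p) :
    pd e (fun q => a q + b q) p = pd e a p + pd e b p := by
  unfold pd; rw [fderiv_fun_add ha hb]; rfl

lemma pd_sub {a b : ℝ × ℝ → F} {p : ℝ × ℝ} (e : ℝ × ℝ)
    (ha : DifferentiableAt ℝ a p) (hb : DifferentiableAt ℝ b p) :
    pd e (fun q => a q - b q) p = pd e a p - pd e b p := by
  unfold pd; rw [fderiv_fun_sub ha hb]; rfl

lemma pd_const_mul {a : ℝ × ℝ → 𝔸} {p : ℝ × ℝ} (e : ℝ × ℝ) (c : 𝔸)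
    (ha : DifferentiableAt ℝ a p) :
    pd e (fun q => c * a q) p = c * pd e a p := by
  unfold pd; rw [fderiv_const_mul ha c]; rfl

lemma pd_inv {a : ℝ × ℝ → ℝ} {p : ℝ × ℝ} (e : ℝ × ℝ)
    (ha : DifferentiableAt ℝ a p) (h0 : a p ≠ 0) :
    pd e (fun q => (a q)⁻¹) p = -(pd e a p) / (a p) ^ 2 := by
  have h := (hasDerivAt_inv h0).comp_hasFDerivAt p ha.hasFDerivAt
  unfold pd
  have h3 : (fun q => (a q)⁻¹) = (fun y => y⁻¹) ∘ a := rfl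
  rw [h3, h.fderiv]
  simp [div_eq_mul_inv]
  ring

lemma pd_conj {W : ℝ × ℝ → ℂ} {p : ℝ × ℝ} (e : ℝ × ℝ) (hW : DifferentiableAt ℝ W p) :
    pd e (fun q => (starRingEnd ℂ) (W q)) p = (starRingEnd ℂ) (pd e W p) := by
  have h1 : (fun q => (starRingEnd ℂ) (W q))
      = ⇑(Complex.conjCLE : ℂ →L[ℝ] ℂ) ∘ W := rfl
  unfold pd
  rw [h1, ((Complex.conjCLE : ℂ →L[ℝ] ℂ).hasFDerivAt.comp p hW.hasFDerivAt).fderiv]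
  rfl

lemma pd_re {W : ℝ × ℝ → ℂ} {p : ℝ × ℝ} (e : ℝ × ℝ) (hW : DifferentiableAt ℝ W p) :
    pd e (fun q => (W q).re) p = (pd e W p).re := by
  unfold pd
  have h2 : (fun q => (W q).re) = ⇑Complex.reCLM ∘ W := rfl
  rw [h2, (Complex.reCLM.hasFDerivAt.comp p hW.hasFDerivAt).fderiv]
  rfl

lemma pd_ofReal {f : ℝ × ℝ → ℝ} {p : ℝ × ℝ} (e : ℝ × ℝ) (hf : DifferentiableAt ℝ f p) :
    pd e (fun q => ((f q : ℝ) : ℂ)) p = ((pd e f p : ℝ) : ℂ) := by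
  unfold pd
  have h2 : (fun q => ((f q : ℝ) : ℂ)) = ⇑Complex.ofRealCLM ∘ f := rfl
  rw [h2, (Complex.ofRealCLM.hasFDerivAt.comp p hf.hasFDerivAt).fderiv]
  rfl

/-- Lemma A: conjugation of the divergence-form operator. -/
lemma lemA (Ω : Set (ℝ × ℝ)) (hΩ : IsOpen Ω) (P s w u : ℝ × ℝ → ℝ)
    (hs : ∀ q ∈ Ω, ContDiffAt ℝ 2 s q) (hw : ∀ q ∈ Ω, ContDiffAt ℝ 2 w q)
    (hs0 : ∀ q ∈ Ω, s q ≠ 0) (hPs : ∀ q ∈ Ω, P q = s q ^ 2)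
    (huw : ∀ q ∈ Ω, u q * s q = w q)
    {p₀ : ℝ × ℝ} (hp₀ : p₀ ∈ Ω) (e : ℝ × ℝ) :
    pd e (fun q => P q * pd e u q) p₀
      = s p₀ * pd e (pd e w) p₀ - w p₀ * pd e (pd e s) p₀ := by
  have hmem := hΩ.mem_nhds hp₀
  have key : ∀ q ∈ Ω, P q * pd e u q = s q * pd e w q - w q * pd e s q := by
    intro q hq
    have hsd : DifferentiableAt ℝ s q := (hs q hq).differentiableAt (by norm_num)
    have hwd : DifferentiableAt ℝ w q := (hw q hq).differentiableAt (by norm_num)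
    have hs0q := hs0 q hq
    have hueq : u =ᶠ[nhds q] fun r => (s r)⁻¹ * w r := by
      filter_upwards [hΩ.mem_nhds hq] with r hr
      rw [inv_mul_eq_div, eq_div_iff (hs0 r hr)]
      exact huw r hr
    have hpdu : pd e u q = -(pd e s q) / s q ^ 2 * w q + (s q)⁻¹ * pd e w q := by
      rw [pd_congr e hueq, pd_mul (a := fun r => (s r)⁻¹) e (hsd.inv hs0q) hwd, pd_inv e hsd hs0q]
    rw [hpdu, hPs q hq]
    field_simp
    ring
  have hev : (fun q => P q * pd e u q) =ᶠ[nhds p₀]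
      (fun q => s q * pd e w q - w q * pd e s q) :=
    Filter.eventuallyEq_of_mem hmem key
  have hsd := (hs p₀ hp₀).differentiableAt (by norm_num)
  have hwd := (hw p₀ hp₀).differentiableAt (by norm_num)
  have hpws := differentiableAt_pd (hw p₀ hp₀) e
  have hpss := differentiableAt_pd (hs p₀ hp₀) e
  rw [pd_congr e hev, pd_sub (a := fun q => s q * pd e w q) (b := fun q => w q * pd e s q) e (hsd.mul hpws) (hwd.mul hpss),
    pd_mul e hsd hpws, pd_mul e hwd hpss]
  ring

/-- real-part extraction lemma -/
lemma alg_re (x1 x2 : ℝ) (w L : ℂ) (c t : ℝ)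
    (h : 4 * ((1/2) * ((x1 : ℂ) - Complex.I * x2)) * ((1/2) * ((x1 : ℂ) + Complex.I * x2))
          * (starRingEnd ℂ) w + (c : ℂ) ^ 2 * L
        = (t : ℂ) * (c : ℂ) * (starRingEnd ℂ) w
          + 4 * ((1/2) * ((x1 : ℂ) + Complex.I * x2)) * ((1/2) * ((x1 : ℂ) - Complex.I * x2)) * w) :
    c ^ 2 * L.re = t * c * w.re := by
  have h2 := congrArg Complex.re h
  simp [Complex.add_re, Complex.mul_re, Complex.mul_im, Complex.sub_re, Complex.sub_im,
    Complex.ofReal_re, Complex.ofReal_im, Complex.conj_re, Complex.conj_im,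
    Complex.I_re, Complex.I_im, pow_two] at h2
  linarith [h2]

end Vekua
end





/-- complex-valued partial derivatives and the ∂_z̄ operator -/
noncomputable def pdxC (f : ℝ × ℝ → ℂ) (p : ℝ × ℝ) : ℂ := fderiv ℝ f p (1, 0)
noncomputable def pdyC (f : ℝ × ℝ → ℂ) (p : ℝ × ℝ) : ℂ := fderiv ℝ f p (0, 1)
noncomputable def dzbarC (f : ℝ × ℝ → ℂ) (p : ℝ × ℝ) : ℂ :=
  (1 / 2) * (pdxC f p + Complex.I * pdyC f p)
noncomputable def dzbarR (f : ℝ × ℝ → ℝ) (p : ℝ × ℝ) : ℂ :=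
  (1 / 2) * ((pdx f p : ℂ) + Complex.I * (pdy f p : ℂ))

open Vekua in
theorem stmt14 (Ω : Set (ℝ × ℝ)) (hΩopen : IsOpen Ω)
    (P Q u₀ : ℝ × ℝ → ℝ)
    (hP : ContDiffOn ℝ 2 P Ω) (hPpos : ∀ p ∈ Ω, 0 < P p)
    (hu₀ : ContDiffOn ℝ 2 u₀ Ω) (hu₀pos : ∀ p ∈ Ω, 0 < u₀ p)
    (hu₀sol : ∀ p ∈ Ω,
      pdx (fun q => P q * pdx u₀ q) p + pdy (fun q => P q * pdy u₀ q) p + Q p * u₀ p = 0)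
    (f : ℝ × ℝ → ℝ) (hf : ∀ p : ℝ × ℝ, f p = Real.sqrt (P p) * u₀ p)
    (W : ℝ × ℝ → ℂ) (hW : ContDiffOn ℝ 2 W Ω)
    (hVekua : ∀ p ∈ Ω, dzbarC W p = (dzbarR f p / (f p : ℂ)) * starRingEnd ℂ (W p))
    (u : ℝ × ℝ → ℝ) (hu : ∀ p : ℝ × ℝ, u p = (1 / Real.sqrt (P p)) * (W p).re) :
    ∀ p ∈ Ω,
      pdx (fun q => P q * pdx u q) p + pdy (fun q => P q * pdy u q) p + Q p * u p = 0 := by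

  classical
  intro p₀ hp₀
  have hmem := hΩopen.mem_nhds hp₀
  set ex : ℝ × ℝ := (1, 0) with hex
  set ey : ℝ × ℝ := (0, 1) with hey
  set s : ℝ × ℝ → ℝ := fun q => Real.sqrt (P q) with hs_def
  -- basic facts about s
  have hspos : ∀ q ∈ Ω, 0 < s q := fun q hq => Real.sqrt_pos.mpr (hPpos q hq)
  have hs0 : ∀ q ∈ Ω, s q ≠ 0 := fun q hq => (hspos q hq).ne'
  have hPs : ∀ q ∈ Ω, P q = s q ^ 2 := fun q hq =>
    (Real.sq_sqrt (hPpos q hq).le).symm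
  have hsC : ∀ q ∈ Ω, ContDiffAt ℝ 2 s q := fun q hq =>
    (Real.contDiffAt_sqrt (hPpos q hq).ne').comp q (hP.contDiffAt (hΩopen.mem_nhds hq))
  -- facts about f
  have hf2 : ∀ q ∈ Ω, ContDiffAt ℝ 2 f q := by
    intro q hq
    have : ContDiffAt ℝ 2 (fun r => s r * u₀ r) q :=
      (hsC q hq).mul (hu₀.contDiffAt (hΩopen.mem_nhds hq))
    exact this.congr_of_eventuallyEq (Filter.Eventually.of_forall fun r => hf r)
  have hfpos : ∀ q ∈ Ω, 0 < f q := fun q hq => by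
    rw [hf q]; exact mul_pos (hspos q hq) (hu₀pos q hq)
  have hf0 : ∀ q ∈ Ω, f q ≠ 0 := fun q hq => (hfpos q hq).ne'
  -- v = Re W
  set v : ℝ × ℝ → ℝ := fun q => (W q).re with hv_def
  have hv2 : ∀ q ∈ Ω, ContDiffAt ℝ 2 v q := fun q hq =>
    (Complex.reCLM.contDiff.contDiffAt (n := 2)).comp q (hW.contDiffAt (hΩopen.mem_nhds hq))
  have hW2 : ∀ q ∈ Ω, ContDiffAt ℝ 2 W q := fun q hq => hW.contDiffAt (hΩopen.mem_nhds hq)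
  have hWd : ∀ q ∈ Ω, DifferentiableAt ℝ W q := fun q hq =>
    (hW2 q hq).differentiableAt (by norm_num)
  -- Step 2 : equation for f from hu₀sol
  have huw₀ : ∀ q ∈ Ω, u₀ q * s q = f q := fun q hq => by rw [hf q]; ring
  have h2 : s p₀ * pd ex (pd ex f) p₀ - f p₀ * pd ex (pd ex s) p₀
      + (s p₀ * pd ey (pd ey f) p₀ - f p₀ * pd ey (pd ey s) p₀)
      + Q p₀ * u₀ p₀ = 0 := by
    have h := hu₀sol p₀ hp₀
    have hx : pdx (fun q => P q * pdx u₀ q) p₀ = pd ex (fun q => P q * pd ex u₀ q) p₀ := rfl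
    have hy : pdy (fun q => P q * pdy u₀ q) p₀ = pd ey (fun q => P q * pd ey u₀ q) p₀ := rfl
    rw [hx, hy, lemA Ω hΩopen P s f u₀ hsC hf2 hs0 hPs huw₀ hp₀ ex,
      lemA Ω hΩopen P s f u₀ hsC hf2 hs0 hPs huw₀ hp₀ ey] at h
    linarith [h]
  -- Step: goal reduction via lemA applied to u (with w = v)
  have huwv : ∀ q ∈ Ω, u q * s q = v q := fun q hq => by
    have h1 : s q = Real.sqrt (P q) := rfl
    have h2 : v q = (W q).re := rfl
    rw [hu q, h2, ← h1]
    field_simp [hs0 q hq]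
  have hgoal_red : pdx (fun q => P q * pdx u q) p₀ + pdy (fun q => P q * pdy u q) p₀
      + Q p₀ * u p₀
      = s p₀ * pd ex (pd ex v) p₀ - v p₀ * pd ex (pd ex s) p₀
      + (s p₀ * pd ey (pd ey v) p₀ - v p₀ * pd ey (pd ey s) p₀)
      + Q p₀ * ((1 / s p₀) * v p₀) := by
    have hx : pdx (fun q => P q * pdx u q) p₀ = pd ex (fun q => P q * pd ex u q) p₀ := rfl
    have hy : pdy (fun q => P q * pdy u q) p₀ = pd ey (fun q => P q * pd ey u q) p₀ := rfl
    rw [hx, hy, lemA Ω hΩopen P s v u hsC hv2 hs0 hPs huwv hp₀ ex,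
      lemA Ω hΩopen P s v u hsC hv2 hs0 hPs huwv hp₀ ey, hu p₀]
  -- Step 3 : the complex computation
  -- abbreviations
  set Ax : ℝ × ℝ → ℂ := pd ex W with hAx
  set Ay : ℝ × ℝ → ℂ := pd ey W with hAy
  set fx : ℝ × ℝ → ℝ := pd ex f with hfx
  set fy : ℝ × ℝ → ℝ := pd ey f with hfy
  have hDW : dzbarC W = fun q => (1/2 : ℂ) * (Ax q + Complex.I * Ay q) := rfl
  have hDf : dzbarR f = fun q => (1/2 : ℂ) * ((fx q : ℂ) + Complex.I * (fy q : ℂ)) := rfl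
  -- the multiplied-out Vekua equation
  have hE : ∀ q ∈ Ω, (f q : ℂ) * ((1/2 : ℂ) * (Ax q + Complex.I * Ay q))
      = ((1/2 : ℂ) * ((fx q : ℂ) + Complex.I * (fy q : ℂ))) * (starRingEnd ℂ) (W q) := by
    intro q hq
    have h := hVekua q hq
    have hDWq : dzbarC W q = (1/2 : ℂ) * (Ax q + Complex.I * Ay q) := rfl
    have hDfq : dzbarR f q = (1/2 : ℂ) * ((fx q : ℂ) + Complex.I * (fy q : ℂ)) := rfl
    rw [hDWq, hDfq] at h
    rw [h]
    have : ((f q : ℂ)) ≠ 0 := Complex.ofReal_ne_zero.mpr (hf0 q hq)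
    field_simp
  -- differentiability at p₀
  have dW : DifferentiableAt ℝ W p₀ := hWd p₀ hp₀
  have dAx : DifferentiableAt ℝ Ax p₀ := differentiableAt_pd (hW2 p₀ hp₀) ex
  have dAy : DifferentiableAt ℝ Ay p₀ := differentiableAt_pd (hW2 p₀ hp₀) ey
  have df : DifferentiableAt ℝ f p₀ := (hf2 p₀ hp₀).differentiableAt (by norm_num)
  have dfx : DifferentiableAt ℝ fx p₀ := differentiableAt_pd (hf2 p₀ hp₀) ex
  have dfy : DifferentiableAt ℝ fy p₀ := differentiableAt_pd (hf2 p₀ hp₀) ey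
  have dfC : DifferentiableAt ℝ (fun q => ((f q : ℝ) : ℂ)) p₀ :=
    Complex.ofRealCLM.differentiableAt.comp p₀ df
  have dfxC : DifferentiableAt ℝ (fun q => ((fx q : ℝ) : ℂ)) p₀ :=
    Complex.ofRealCLM.differentiableAt.comp p₀ dfx
  have dfyC : DifferentiableAt ℝ (fun q => ((fy q : ℝ) : ℂ)) p₀ :=
    Complex.ofRealCLM.differentiableAt.comp p₀ dfy
  have dcW : DifferentiableAt ℝ (fun q => (starRingEnd ℂ) (W q)) p₀ :=
    (Complex.conjCLE : ℂ →L[ℝ] ℂ).differentiableAt.comp p₀ dW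
  have dDW : DifferentiableAt ℝ (fun q => (1/2 : ℂ) * (Ax q + Complex.I * Ay q)) p₀ :=
    ((dAx.add (dAy.const_mul Complex.I)).const_mul (1/2 : ℂ))
  have dDf : DifferentiableAt ℝ
      (fun q => (1/2 : ℂ) * ((fx q : ℂ) + Complex.I * (fy q : ℂ))) p₀ :=
    ((dfxC.add (dfyC.const_mul Complex.I)).const_mul (1/2 : ℂ))
  -- derivative of the Vekua equation at p₀ in direction e
  have hder : ∀ e : ℝ × ℝ,
      ((pd e f p₀ : ℝ) : ℂ) * ((1/2 : ℂ) * (Ax p₀ + Complex.I * Ay p₀))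
        + (f p₀ : ℂ) * ((1/2 : ℂ) * (pd e Ax p₀ + Complex.I * pd e Ay p₀))
      = ((1/2 : ℂ) * (((pd e fx p₀ : ℝ) : ℂ) + Complex.I * ((pd e fy p₀ : ℝ) : ℂ)))
          * (starRingEnd ℂ) (W p₀)
        + ((1/2 : ℂ) * ((fx p₀ : ℂ) + Complex.I * (fy p₀ : ℂ)))
          * (starRingEnd ℂ) (pd e W p₀) := by
    intro e
    have hEE : (fun q => (f q : ℂ) * ((1/2 : ℂ) * (Ax q + Complex.I * Ay q)))
        =ᶠ[nhds p₀]
        (fun q => ((1/2 : ℂ) * ((fx q : ℂ) + Complex.I * (fy q : ℂ)))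
          * (starRingEnd ℂ) (W q)) :=
      Filter.eventuallyEq_of_mem hmem hE
    have hL := pd_congr e hEE
    rw [pd_mul e dfC dDW, pd_mul e dDf dcW, pd_ofReal e df, pd_conj e dW,
      pd_const_mul (a := fun q => Ax q + Complex.I * Ay q) e _ (dAx.add (dAy.const_mul Complex.I)),
      pd_add e dAx (dAy.const_mul Complex.I),
      pd_const_mul e Complex.I dAy,
      pd_const_mul (a := fun q => (fx q : ℂ) + Complex.I * (fy q : ℂ)) e _ (dfxC.add (dfyC.const_mul Complex.I)),
      pd_add e dfxC (dfyC.const_mul Complex.I),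
      pd_const_mul e Complex.I dfyC,
      pd_ofReal e dfx, pd_ofReal e dfy] at hL
    exact hL
  have hX := hder ex
  have hY := hder ey
  -- Schwarz symmetry
  have hWsymm : pd ey Ax p₀ = pd ex Ay p₀ := pd_comm (hW2 p₀ hp₀) ex ey
  have hfsymm : pd ey fx p₀ = pd ex fy p₀ := pd_comm (hf2 p₀ hp₀) ex ey
  rw [hWsymm, hfsymm] at hY
  -- Vekua equation at p₀ and its conjugate
  have hE0 := hE p₀ hp₀
  have hE0c : (f p₀ : ℂ) * ((1/2 : ℂ) * ((starRingEnd ℂ) (Ax p₀)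
        - Complex.I * (starRingEnd ℂ) (Ay p₀)))
      = ((1/2 : ℂ) * ((fx p₀ : ℂ) - Complex.I * (fy p₀ : ℂ))) * W p₀ := by
    have h := congrArg (starRingEnd ℂ) hE0
    simp only [map_mul, map_add, map_sub, Complex.conj_ofReal, Complex.conj_I,
      Complex.conj_conj, map_one, map_ofNat, map_div₀] at h
    linear_combination h
  -- rewrite hX, hY using pd e W p₀ = A• p₀
  have hAx0 : pd ex W p₀ = Ax p₀ := rfl
  have hAy0 : pd ey W p₀ = Ay p₀ := rfl
  rw [hAx0] at hX
  rw [hAy0] at hY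
  -- the key complex identity
  have hkey : 4 * ((1/2 : ℂ) * ((fx p₀ : ℂ) - Complex.I * (fy p₀ : ℂ)))
        * ((1/2 : ℂ) * ((fx p₀ : ℂ) + Complex.I * (fy p₀ : ℂ))) * (starRingEnd ℂ) (W p₀)
      + ((f p₀ : ℂ)) ^ 2 * (pd ex Ax p₀ + pd ey Ay p₀)
      = ((pd ex fx p₀ + pd ey fy p₀ : ℝ) : ℂ) * (f p₀ : ℂ) * (starRingEnd ℂ) (W p₀)
      + 4 * ((1/2 : ℂ) * ((fx p₀ : ℂ) + Complex.I * (fy p₀ : ℂ)))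
        * ((1/2 : ℂ) * ((fx p₀ : ℂ) - Complex.I * (fy p₀ : ℂ))) * W p₀ := by
    push_cast
    linear_combination (2 * (f p₀ : ℂ)) * hX - (2 * (f p₀ : ℂ) * Complex.I) * hY
      - (4 * ((1/2 : ℂ) * ((fx p₀ : ℂ) - Complex.I * (fy p₀ : ℂ)))) * hE0
      + (4 * ((1/2 : ℂ) * ((fx p₀ : ℂ) + Complex.I * (fy p₀ : ℂ)))) * hE0c
      + (((f p₀ : ℂ)) ^ 2 * pd ey Ay p₀
        - (f p₀ : ℂ) * ((pd ey fy p₀ : ℝ) : ℂ) * (starRingEnd ℂ) (W p₀)) * Complex.I_sq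
  -- extract real parts
  have h3 : (f p₀) ^ 2 * (pd ex Ax p₀ + pd ey Ay p₀).re
      = (pd ex fx p₀ + pd ey fy p₀) * f p₀ * (W p₀).re :=
    alg_re (fx p₀) (fy p₀) (W p₀) _ (f p₀) _ hkey
  -- second derivatives of v in terms of Ax, Ay
  have hvlap : ∀ e : ℝ × ℝ, pd e (pd e v) p₀ = (pd e (pd e W) p₀).re := by
    intro e
    have hEv : pd e v =ᶠ[nhds p₀] fun q => (pd e W q).re := by
      filter_upwards [hmem] with q hq
      exact pd_re e (hWd q hq)
    rw [pd_congr e hEv, pd_re e (differentiableAt_pd (hW2 p₀ hp₀) e)]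
  have hvxx : pd ex (pd ex v) p₀ = (pd ex Ax p₀).re := hvlap ex
  have hvyy : pd ey (pd ey v) p₀ = (pd ey Ay p₀).re := hvlap ey
  -- assemble everything (all real arithmetic)
  rw [hgoal_red, hvxx, hvyy]
  have hF0 : f p₀ = s p₀ * u₀ p₀ := hf p₀
  have hSne : s p₀ ≠ 0 := hs0 p₀ hp₀
  have hFne : f p₀ ≠ 0 := hf0 p₀ hp₀
  have hsum : (pd ex Ax p₀ + pd ey Ay p₀).re = (pd ex Ax p₀).re + (pd ey Ay p₀).re :=
    Complex.add_re _ _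
  rw [hsum] at h3
  have h3c : ((pd ex Ax p₀).re + (pd ey Ay p₀).re) * f p₀
      = (pd ex fx p₀ + pd ey fy p₀) * (W p₀).re := by
    apply mul_left_cancel₀ hFne
    linear_combination h3
  have hfxx : pd ex fx p₀ = pd ex (pd ex f) p₀ := rfl
  have hfyy : pd ey fy p₀ = pd ey (pd ey f) p₀ := rfl
  rw [hfxx, hfyy] at h3c
  have hv0 : v p₀ = (W p₀).re := rfl
  have key : f p₀ * ((s p₀ * (pd ex Ax p₀).re - v p₀ * pd ex (pd ex s) p₀
      + (s p₀ * (pd ey Ay p₀).re - v p₀ * pd ey (pd ey s) p₀)) * s p₀ + Q p₀ * v p₀) = 0 := by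
    rw [hv0]
    linear_combination ((W p₀).re * s p₀) * h2 + (s p₀) ^ 2 * h3c
      + (Q p₀ * (W p₀).re) * hF0
  have hgoal2 : s p₀ * (pd ex Ax p₀).re - v p₀ * pd ex (pd ex s) p₀
      + (s p₀ * (pd ey Ay p₀).re - v p₀ * pd ey (pd ey s) p₀) + Q p₀ * (1 / s p₀ * v p₀)
      = (f p₀ * ((s p₀ * (pd ex Ax p₀).re - v p₀ * pd ex (pd ex s) p₀
        + (s p₀ * (pd ey Ay p₀).re - v p₀ * pd ey (pd ey s) p₀)) * s p₀ + Q p₀ * v p₀))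
        / (f p₀ * s p₀) := by
    field_simp
  rw [hgoal2, key, zero_div]
end

section
/- Let p, q, u₀ : Ω → ℝ as above with u₀ > 0 solving div(p∇u₀) + qu₀ = 0, f = √p u₀, and let W be a C² solution of ∂_z̄ W = (∂_z̄ f/f) conj(W). Then v = √p · Im W satisfies div((1/p)∇v) + q₁ v = 0, where q₁ = -(1/p)(q/p + 2⟨∇p/p, ∇u₀/u₀⟩ + 2|∇u₀/u₀|²). -/
section helpers

lemma pd_mul {f g : ℝ × ℝ → ℝ} {z : ℝ × ℝ} (hf : DifferentiableAt ℝ f z)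
    (hg : DifferentiableAt ℝ g z) (w : ℝ × ℝ) :
    fderiv ℝ (fun q => f q * g q) z w = fderiv ℝ f z w * g z + f z * fderiv ℝ g z w := by
  rw [fderiv_fun_mul hf hg]; simp; ring

lemma pd_div {f g : ℝ × ℝ → ℝ} {z : ℝ × ℝ} (hf : DifferentiableAt ℝ f z)
    (hg : DifferentiableAt ℝ g z) (hg0 : g z ≠ 0) (w : ℝ × ℝ) :
    fderiv ℝ (fun q => f q / g q) z w
      = (fderiv ℝ f z w * g z - f z * fderiv ℝ g z w) / (g z) ^ 2 := by
  have hi : HasFDerivAt (fun q => (g q)⁻¹) ((-((g z) ^ 2)⁻¹) • fderiv ℝ g z) z :=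
    (hasDerivAt_inv hg0).comp_hasFDerivAt z hg.hasFDerivAt
  have h2 := hf.hasFDerivAt.mul hi
  simp only [div_eq_mul_inv]
  rw [show (fun q => f q * (g q)⁻¹) = (f * fun q => (g q)⁻¹) from rfl, h2.fderiv]
  simp
  field_simp
  ring

lemma diff_div {f g : ℝ × ℝ → ℝ} {z : ℝ × ℝ} (hf : DifferentiableAt ℝ f z)
    (hg : DifferentiableAt ℝ g z) (hg0 : g z ≠ 0) :
    DifferentiableAt ℝ (fun q => f q / g q) z := by
  simp only [div_eq_mul_inv]
  exact hf.mul ((hasDerivAt_inv hg0).comp_hasFDerivAt z hg.hasFDerivAt).differentiableAt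

lemma pd_sub {f g : ℝ × ℝ → ℝ} {z : ℝ × ℝ} (hf : DifferentiableAt ℝ f z)
    (hg : DifferentiableAt ℝ g z) (w : ℝ × ℝ) :
    fderiv ℝ (fun q => f q - g q) z w = fderiv ℝ f z w - fderiv ℝ g z w := by
  rw [fderiv_fun_sub hf hg]; rfl

lemma pd_neg {f : ℝ × ℝ → ℝ} {z : ℝ × ℝ} (w : ℝ × ℝ) :
    fderiv ℝ (fun q => -(f q)) z w = -(fderiv ℝ f z w) := by
  rw [fderiv_fun_neg]; rfl

lemma pd_re {W : ℝ × ℝ → ℂ} {z : ℝ × ℝ} (hW : DifferentiableAt ℝ W z) (w : ℝ × ℝ) :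
    fderiv ℝ (fun q => (W q).re) z w = (fderiv ℝ W z w).re := by
  have h : (fun q => (W q).re) = Complex.reCLM ∘ W := rfl
  rw [h, fderiv_comp z Complex.reCLM.differentiableAt hW]; simp

lemma pd_im {W : ℝ × ℝ → ℂ} {z : ℝ × ℝ} (hW : DifferentiableAt ℝ W z) (w : ℝ × ℝ) :
    fderiv ℝ (fun q => (W q).im) z w = (fderiv ℝ W z w).im := by
  have h : (fun q => (W q).im) = Complex.imCLM ∘ W := rfl
  rw [h, fderiv_comp z Complex.imCLM.differentiableAt hW]; simp

lemma pd_sqrt {P : ℝ × ℝ → ℝ} {z : ℝ × ℝ} (hP : DifferentiableAt ℝ P z) (h0 : P z ≠ 0)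
    (w : ℝ × ℝ) :
    fderiv ℝ (fun q => Real.sqrt (P q)) z w = fderiv ℝ P z w / (2 * Real.sqrt (P z)) := by
  have h := (Real.hasDerivAt_sqrt h0).comp_hasFDerivAt z hP.hasFDerivAt
  rw [show (fun q => Real.sqrt (P q)) = (Real.sqrt ∘ P) from rfl, h.fderiv]
  simp; ring

lemma pd_pd {u : ℝ × ℝ → ℝ} {z : ℝ × ℝ} (hu : ContDiffAt ℝ 2 u z) (c w : ℝ × ℝ) :
    fderiv ℝ (fun q => fderiv ℝ u q c) z w = fderiv ℝ (fderiv ℝ u) z w c := by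
  have hd : DifferentiableAt ℝ (fderiv ℝ u) z :=
    (hu.fderiv_right (m := 1) (by norm_num)).differentiableAt (by norm_num)
  rw [fderiv_clm_apply hd (differentiableAt_const c)]; simp

lemma pd_schwarz {u : ℝ × ℝ → ℝ} {z : ℝ × ℝ} (hu : ContDiffAt ℝ 2 u z) :
    fderiv ℝ (fun q => fderiv ℝ u q (0, 1)) z (1, 0)
      = fderiv ℝ (fun q => fderiv ℝ u q (1, 0)) z (0, 1) := by
  rw [pd_pd hu, pd_pd hu]
  exact (hu.isSymmSndFDerivAt (by simp [minSmoothness_of_isRCLikeNormedField])) (1, 0) (0, 1)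

lemma diff_pd {u : ℝ × ℝ → ℝ} {z : ℝ × ℝ} (hu : ContDiffAt ℝ 2 u z) (c : ℝ × ℝ) :
    DifferentiableAt ℝ (fun q => fderiv ℝ u q c) z := by
  have hd : DifferentiableAt ℝ (fderiv ℝ u) z :=
    (hu.fderiv_right (m := 1) (by norm_num)).differentiableAt (by norm_num)
  exact hd.clm_apply (differentiableAt_const c)

lemma vekua_real {W : ℝ × ℝ → ℂ} {F : ℝ × ℝ → ℝ} {z : ℝ × ℝ}
    (hW : DifferentiableAt ℝ W z) (hF0 : F z ≠ 0)
    (hVek : dzbarC W z = (dzbarR F z / (F z : ℂ)) * starRingEnd ℂ (W z)) :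
    (fderiv ℝ (fun q => (W q).re) z (1,0) * F z - (W z).re * fderiv ℝ F z (1,0)
       = fderiv ℝ F z (0,1) * (W z).im + fderiv ℝ (fun q => (W q).im) z (0,1) * F z)
    ∧ (fderiv ℝ (fun q => (W q).re) z (0,1) * F z - (W z).re * fderiv ℝ F z (0,1)
       = -(fderiv ℝ F z (1,0) * (W z).im + fderiv ℝ (fun q => (W q).im) z (1,0) * F z)) := by
  have hF0' : (F z : ℂ) ≠ 0 := by exact_mod_cast hF0
  have h1 : dzbarC W z * (F z : ℂ) = dzbarR F z * starRingEnd ℂ (W z) := by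
    rw [hVek]; field_simp
  have e1 := congrArg Complex.re h1
  have e2 := congrArg Complex.im h1
  simp only [dzbarC, dzbarR, pdxC, pdyC, pdx, pdy, Complex.mul_re, Complex.mul_im,
    Complex.add_re, Complex.add_im, Complex.I_re, Complex.I_im, Complex.ofReal_re,
    Complex.ofReal_im, Complex.conj_re, Complex.conj_im, Complex.div_re, Complex.div_im,
    Complex.one_re, Complex.one_im] at e1 e2
  rw [pd_re hW (1,0), pd_re hW (0,1), pd_im hW (1,0), pd_im hW (0,1)]
  norm_num at e1 e2
  constructor
  · linear_combination 2 * e1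
  · linear_combination 2 * e2

end helpers

set_option maxHeartbeats 2000000 in
theorem stmt15 (Ω : Set (ℝ × ℝ)) (hΩopen : IsOpen Ω)
    (P Q u₀ : ℝ × ℝ → ℝ)
    (hP : ContDiffOn ℝ 2 P Ω) (hPpos : ∀ p ∈ Ω, 0 < P p)
    (hQ : ContinuousOn Q Ω)
    (hu₀ : ContDiffOn ℝ 2 u₀ Ω) (hu₀pos : ∀ p ∈ Ω, 0 < u₀ p)
    (hu₀sol : ∀ p ∈ Ω,
      pdx (fun q => P q * pdx u₀ q) p + pdy (fun q => P q * pdy u₀ q) p + Q p * u₀ p = 0)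
    (f : ℝ × ℝ → ℝ) (hf : ∀ p : ℝ × ℝ, f p = Real.sqrt (P p) * u₀ p)
    (W : ℝ × ℝ → ℂ) (hW : ContDiffOn ℝ 2 W Ω)
    (hVekua : ∀ p ∈ Ω, dzbarC W p = (dzbarR f p / (f p : ℂ)) * starRingEnd ℂ (W p))
    (v : ℝ × ℝ → ℝ) (hv : ∀ p : ℝ × ℝ, v p = Real.sqrt (P p) * (W p).im)
    (q₁ : ℝ × ℝ → ℝ)
    (hq₁ : ∀ p ∈ Ω, q₁ p =
      -(1 / P p) * (Q p / P p
        + 2 * ((pdx P p * pdx u₀ p + pdy P p * pdy u₀ p) / (P p * u₀ p))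
        + 2 * (((pdx u₀ p) ^ 2 + (pdy u₀ p) ^ 2) / (u₀ p) ^ 2))) :
    ∀ p ∈ Ω,
      pdx (fun q => (1 / P q) * pdx v q) p + pdy (fun q => (1 / P q) * pdy v q) p
        + q₁ p * v p = 0 := by
  have hfE : f = fun q => Real.sqrt (P q) * u₀ q := funext hf
  have hvE : v = fun q => Real.sqrt (P q) * (W q).im := funext hv
  subst hfE hvE
  intro p hp
  -- nonvanishing
  have hP0 : ∀ z ∈ Ω, P z ≠ 0 := fun z hz => (hPpos z hz).ne'
  have hu0 : ∀ z ∈ Ω, u₀ z ≠ 0 := fun z hz => (hu₀pos z hz).ne'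
  have hs0 : ∀ z ∈ Ω, Real.sqrt (P z) ≠ 0 := fun z hz => (Real.sqrt_pos.2 (hPpos z hz)).ne'
  have hF0 : ∀ z ∈ Ω, Real.sqrt (P z) * u₀ z ≠ 0 := fun z hz => mul_ne_zero (hs0 z hz) (hu0 z hz)
  have hs2 : ∀ z ∈ Ω, Real.sqrt (P z) ^ 2 = P z := fun z hz => Real.sq_sqrt (hPpos z hz).le
  -- smoothness
  have cP : ∀ z ∈ Ω, ContDiffAt ℝ 2 P z := fun z hz => hP.contDiffAt (hΩopen.mem_nhds hz)
  have cu0 : ∀ z ∈ Ω, ContDiffAt ℝ 2 u₀ z := fun z hz => hu₀.contDiffAt (hΩopen.mem_nhds hz)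
  have cW : ∀ z ∈ Ω, ContDiffAt ℝ 2 W z := fun z hz => hW.contDiffAt (hΩopen.mem_nhds hz)
  have cs : ∀ z ∈ Ω, ContDiffAt ℝ 2 (fun q => Real.sqrt (P q)) z :=
    fun z hz => (cP z hz).sqrt (hP0 z hz)
  have ca : ∀ z ∈ Ω, ContDiffAt ℝ 2 (fun q => (W q).re) z :=
    fun z hz => Complex.reCLM.contDiff.contDiffAt.comp z (cW z hz)
  have cb : ∀ z ∈ Ω, ContDiffAt ℝ 2 (fun q => (W q).im) z :=
    fun z hz => Complex.imCLM.contDiff.contDiffAt.comp z (cW z hz)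
  have cF : ∀ z ∈ Ω, ContDiffAt ℝ 2 (fun q => Real.sqrt (P q) * u₀ q) z :=
    fun z hz => (cs z hz).mul (cu0 z hz)
  have cv : ∀ z ∈ Ω, ContDiffAt ℝ 2 (fun q => Real.sqrt (P q) * (W q).im) z :=
    fun z hz => (cs z hz).mul (cb z hz)
  have cu : ∀ z ∈ Ω, ContDiffAt ℝ 2 (fun q => (W q).re / (Real.sqrt (P q) * u₀ q)) z :=
    fun z hz => (ca z hz).div (cF z hz) (hF0 z hz)
  -- differentiability
  have one2 : (2 : WithTop ℕ∞) ≠ 0 := by norm_num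
  have dP : ∀ z ∈ Ω, DifferentiableAt ℝ P z := fun z hz => (cP z hz).differentiableAt one2
  have du0 : ∀ z ∈ Ω, DifferentiableAt ℝ u₀ z := fun z hz => (cu0 z hz).differentiableAt one2
  have dW : ∀ z ∈ Ω, DifferentiableAt ℝ W z := fun z hz => (cW z hz).differentiableAt one2
  have ds : ∀ z ∈ Ω, DifferentiableAt ℝ (fun q => Real.sqrt (P q)) z :=
    fun z hz => (cs z hz).differentiableAt one2
  have da : ∀ z ∈ Ω, DifferentiableAt ℝ (fun q => (W q).re) z :=
    fun z hz => (ca z hz).differentiableAt one2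
  have db : ∀ z ∈ Ω, DifferentiableAt ℝ (fun q => (W q).im) z :=
    fun z hz => (cb z hz).differentiableAt one2
  have dF : ∀ z ∈ Ω, DifferentiableAt ℝ (fun q => Real.sqrt (P q) * u₀ q) z :=
    fun z hz => (cF z hz).differentiableAt one2
  have dv : ∀ z ∈ Ω, DifferentiableAt ℝ (fun q => Real.sqrt (P q) * (W q).im) z :=
    fun z hz => (cv z hz).differentiableAt one2
  -- derivative values
  have dSv : ∀ z ∈ Ω, ∀ w, fderiv ℝ (fun q => Real.sqrt (P q)) z w
      = fderiv ℝ P z w / (2 * Real.sqrt (P z)) :=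
    fun z hz w => pd_sqrt (dP z hz) (hP0 z hz) w
  have dFv : ∀ z ∈ Ω, ∀ w, fderiv ℝ (fun q => Real.sqrt (P q) * u₀ q) z w
      = fderiv ℝ P z w / (2 * Real.sqrt (P z)) * u₀ z + Real.sqrt (P z) * fderiv ℝ u₀ z w := by
    intro z hz w
    have h : fderiv ℝ (fun q => Real.sqrt (P q) * u₀ q) z w
        = fderiv ℝ (fun q => Real.sqrt (P q)) z w * u₀ z + Real.sqrt (P z) * fderiv ℝ u₀ z w :=
      pd_mul (ds z hz) (du0 z hz) w
    rw [h, dSv z hz w]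
  have dVv : ∀ z ∈ Ω, ∀ w, fderiv ℝ (fun q => Real.sqrt (P q) * (W q).im) z w
      = fderiv ℝ P z w / (2 * Real.sqrt (P z)) * (W z).im
        + Real.sqrt (P z) * fderiv ℝ (fun q => (W q).im) z w := by
    intro z hz w
    have h : fderiv ℝ (fun q => Real.sqrt (P q) * (W q).im) z w
        = fderiv ℝ (fun q => Real.sqrt (P q)) z w * (W z).im
          + Real.sqrt (P z) * fderiv ℝ (fun q => (W q).im) z w :=
      pd_mul (ds z hz) (db z hz) w
    rw [h, dSv z hz w]
  -- Vekua real equations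
  have hE1 : ∀ z ∈ Ω,
      fderiv ℝ (fun q => (W q).re) z (1,0) * (Real.sqrt (P z) * u₀ z)
        - (W z).re * fderiv ℝ (fun q => Real.sqrt (P q) * u₀ q) z (1,0)
      = fderiv ℝ (fun q => Real.sqrt (P q) * u₀ q) z (0,1) * (W z).im
        + fderiv ℝ (fun q => (W q).im) z (0,1) * (Real.sqrt (P z) * u₀ z) :=
    fun z hz => (vekua_real (dW z hz) (hF0 z hz) (hVekua z hz)).1
  have hE2 : ∀ z ∈ Ω,
      fderiv ℝ (fun q => (W q).re) z (0,1) * (Real.sqrt (P z) * u₀ z)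
        - (W z).re * fderiv ℝ (fun q => Real.sqrt (P q) * u₀ q) z (0,1)
      = -(fderiv ℝ (fun q => Real.sqrt (P q) * u₀ q) z (1,0) * (W z).im
          + fderiv ℝ (fun q => (W q).im) z (1,0) * (Real.sqrt (P z) * u₀ z)) :=
    fun z hz => (vekua_real (dW z hz) (hF0 z hz) (hVekua z hz)).2
  -- values of the derivatives of u = a / F
  have hUx : ∀ z ∈ Ω,
      fderiv ℝ (fun q => (W q).re / (Real.sqrt (P q) * u₀ q)) z (1,0)
        = (fderiv ℝ u₀ z (0,1) * (Real.sqrt (P z) * (W z).im)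
            + u₀ z * fderiv ℝ (fun q => Real.sqrt (P q) * (W q).im) z (0,1))
          / (P z * u₀ z ^ 2) := by
    intro z hz
    have h : fderiv ℝ (fun q => (W q).re / (Real.sqrt (P q) * u₀ q)) z (1,0)
        = (fderiv ℝ (fun q => (W q).re) z (1,0) * (Real.sqrt (P z) * u₀ z)
            - (W z).re * fderiv ℝ (fun q => Real.sqrt (P q) * u₀ q) z (1,0))
          / (Real.sqrt (P z) * u₀ z) ^ 2 :=
      pd_div (da z hz) (dF z hz) (hF0 z hz) (1,0)
    rw [h, hE1 z hz, dFv z hz (0,1), dVv z hz (0,1)]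
    set S := Real.sqrt (P z) with hS
    have h2 : P z = S ^ 2 := by rw [hS]; exact (hs2 z hz).symm
    rw [h2]
    have hS0 : S ≠ 0 := hs0 z hz
    have hu0' := hu0 z hz
    field_simp
    ring
  have hUy : ∀ z ∈ Ω,
      fderiv ℝ (fun q => (W q).re / (Real.sqrt (P q) * u₀ q)) z (0,1)
        = -((fderiv ℝ u₀ z (1,0) * (Real.sqrt (P z) * (W z).im)
            + u₀ z * fderiv ℝ (fun q => Real.sqrt (P q) * (W q).im) z (1,0))
          / (P z * u₀ z ^ 2)) := by
    intro z hz
    have h : fderiv ℝ (fun q => (W q).re / (Real.sqrt (P q) * u₀ q)) z (0,1)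
        = (fderiv ℝ (fun q => (W q).re) z (0,1) * (Real.sqrt (P z) * u₀ z)
            - (W z).re * fderiv ℝ (fun q => Real.sqrt (P q) * u₀ q) z (0,1))
          / (Real.sqrt (P z) * u₀ z) ^ 2 :=
      pd_div (da z hz) (dF z hz) (hF0 z hz) (0,1)
    rw [h, hE2 z hz, dFv z hz (1,0), dVv z hz (1,0)]
    set S := Real.sqrt (P z) with hS
    have h2 : P z = S ^ 2 := by rw [hS]; exact (hs2 z hz).symm
    rw [h2]
    have hS0 : S ≠ 0 := hs0 z hz
    have hu0' := hu0 z hz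
    field_simp
    ring
  -- the key first-order identities, valid on Ω
  have hK1 : ∀ z ∈ Ω,
      1 / P z * fderiv ℝ (fun q => Real.sqrt (P q) * (W q).im) z (1,0)
        = -(u₀ z) * fderiv ℝ (fun q => (W q).re / (Real.sqrt (P q) * u₀ q)) z (0,1)
          - Real.sqrt (P z) * (W z).im * fderiv ℝ u₀ z (1,0) / (P z * u₀ z) := by
    intro z hz
    rw [hUy z hz]
    have := hP0 z hz; have := hu0 z hz
    field_simp
    ring
  have hK2 : ∀ z ∈ Ω,
      1 / P z * fderiv ℝ (fun q => Real.sqrt (P q) * (W q).im) z (0,1)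
        = u₀ z * fderiv ℝ (fun q => (W q).re / (Real.sqrt (P q) * u₀ q)) z (1,0)
          - Real.sqrt (P z) * (W z).im * fderiv ℝ u₀ z (0,1) / (P z * u₀ z) := by
    intro z hz
    rw [hUx z hz]
    have := hP0 z hz; have := hu0 z hz
    field_simp
    ring
  -- unfold the goal
  simp only [pdx, pdy]
  -- replace the two divergence terms using the eventual equalities
  have heq1 : (fun q => 1 / P q * fderiv ℝ (fun q => Real.sqrt (P q) * (W q).im) q (1,0))
      =ᶠ[nhds p] (fun q => -(u₀ q) * fderiv ℝ (fun q => (W q).re / (Real.sqrt (P q) * u₀ q)) q (0,1)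
          - Real.sqrt (P q) * (W q).im * fderiv ℝ u₀ q (1,0) / (P q * u₀ q)) :=
    Filter.eventuallyEq_of_mem (hΩopen.mem_nhds hp) (fun z hz => hK1 z hz)
  have heq2 : (fun q => 1 / P q * fderiv ℝ (fun q => Real.sqrt (P q) * (W q).im) q (0,1))
      =ᶠ[nhds p] (fun q => u₀ q * fderiv ℝ (fun q => (W q).re / (Real.sqrt (P q) * u₀ q)) q (1,0)
          - Real.sqrt (P q) * (W q).im * fderiv ℝ u₀ q (0,1) / (P q * u₀ q)) :=
    Filter.eventuallyEq_of_mem (hΩopen.mem_nhds hp) (fun z hz => hK2 z hz)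
  rw [Filter.EventuallyEq.fderiv_eq heq1, Filter.EventuallyEq.fderiv_eq heq2]
  -- differentiability of the pieces at p
  have dupdy : DifferentiableAt ℝ
      (fun q => fderiv ℝ (fun q => (W q).re / (Real.sqrt (P q) * u₀ q)) q (0,1)) p :=
    diff_pd (cu p hp) (0,1)
  have dupdx : DifferentiableAt ℝ
      (fun q => fderiv ℝ (fun q => (W q).re / (Real.sqrt (P q) * u₀ q)) q (1,0)) p :=
    diff_pd (cu p hp) (1,0)
  have du0pdx : DifferentiableAt ℝ (fun q => fderiv ℝ u₀ q (1,0)) p := diff_pd (cu0 p hp) (1,0)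
  have du0pdy : DifferentiableAt ℝ (fun q => fderiv ℝ u₀ q (0,1)) p := diff_pd (cu0 p hp) (0,1)
  have dneg : DifferentiableAt ℝ (fun q => -(u₀ q)) p := (du0 p hp).neg
  have dPu : DifferentiableAt ℝ (fun q => P q * u₀ q) p := (dP p hp).mul (du0 p hp)
  have hPu0 : P p * u₀ p ≠ 0 := mul_ne_zero (hP0 p hp) (hu0 p hp)
  have dnum1 : DifferentiableAt ℝ (fun q => Real.sqrt (P q) * (W q).im * fderiv ℝ u₀ q (1,0)) p :=
    (dv p hp).mul du0pdx
  have dnum2 : DifferentiableAt ℝ (fun q => Real.sqrt (P q) * (W q).im * fderiv ℝ u₀ q (0,1)) p :=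
    (dv p hp).mul du0pdy
  -- expand the x-derivative
  have ex0 : fderiv ℝ (fun q =>
        -(u₀ q) * fderiv ℝ (fun q => (W q).re / (Real.sqrt (P q) * u₀ q)) q (0,1)
          - Real.sqrt (P q) * (W q).im * fderiv ℝ u₀ q (1,0) / (P q * u₀ q)) p (1,0)
      = fderiv ℝ (fun q =>
            -(u₀ q) * fderiv ℝ (fun q => (W q).re / (Real.sqrt (P q) * u₀ q)) q (0,1)) p (1,0)
        - fderiv ℝ (fun q =>
            Real.sqrt (P q) * (W q).im * fderiv ℝ u₀ q (1,0) / (P q * u₀ q)) p (1,0) :=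
    pd_sub (dneg.mul dupdy) (diff_div dnum1 dPu hPu0) (1,0)
  have ex1 : fderiv ℝ (fun q =>
        -(u₀ q) * fderiv ℝ (fun q => (W q).re / (Real.sqrt (P q) * u₀ q)) q (0,1)) p (1,0)
      = fderiv ℝ (fun q => -(u₀ q)) p (1,0)
          * fderiv ℝ (fun q => (W q).re / (Real.sqrt (P q) * u₀ q)) p (0,1)
        + -(u₀ p) * fderiv ℝ
            (fun q => fderiv ℝ (fun q => (W q).re / (Real.sqrt (P q) * u₀ q)) q (0,1)) p (1,0) :=
    pd_mul dneg dupdy (1,0)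
  have ex2 : fderiv ℝ (fun q =>
        Real.sqrt (P q) * (W q).im * fderiv ℝ u₀ q (1,0) / (P q * u₀ q)) p (1,0)
      = (fderiv ℝ (fun q => Real.sqrt (P q) * (W q).im * fderiv ℝ u₀ q (1,0)) p (1,0)
            * (P p * u₀ p)
          - Real.sqrt (P p) * (W p).im * fderiv ℝ u₀ p (1,0)
            * fderiv ℝ (fun q => P q * u₀ q) p (1,0))
        / (P p * u₀ p) ^ 2 :=
    pd_div dnum1 dPu hPu0 (1,0)
  have ex3 : fderiv ℝ (fun q => Real.sqrt (P q) * (W q).im * fderiv ℝ u₀ q (1,0)) p (1,0)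
      = fderiv ℝ (fun q => Real.sqrt (P q) * (W q).im) p (1,0) * fderiv ℝ u₀ p (1,0)
        + Real.sqrt (P p) * (W p).im * fderiv ℝ (fun q => fderiv ℝ u₀ q (1,0)) p (1,0) :=
    pd_mul (dv p hp) du0pdx (1,0)
  have ex4 : fderiv ℝ (fun q => P q * u₀ q) p (1,0)
      = fderiv ℝ P p (1,0) * u₀ p + P p * fderiv ℝ u₀ p (1,0) :=
    pd_mul (dP p hp) (du0 p hp) (1,0)
  have ex5 : fderiv ℝ (fun q => -(u₀ q)) p (1,0) = -(fderiv ℝ u₀ p (1,0)) := pd_neg (1,0)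
  -- expand the y-derivative
  have ey0 : fderiv ℝ (fun q =>
        u₀ q * fderiv ℝ (fun q => (W q).re / (Real.sqrt (P q) * u₀ q)) q (1,0)
          - Real.sqrt (P q) * (W q).im * fderiv ℝ u₀ q (0,1) / (P q * u₀ q)) p (0,1)
      = fderiv ℝ (fun q =>
            u₀ q * fderiv ℝ (fun q => (W q).re / (Real.sqrt (P q) * u₀ q)) q (1,0)) p (0,1)
        - fderiv ℝ (fun q =>
            Real.sqrt (P q) * (W q).im * fderiv ℝ u₀ q (0,1) / (P q * u₀ q)) p (0,1) :=
    pd_sub ((du0 p hp).mul dupdx) (diff_div dnum2 dPu hPu0) (0,1)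
  have ey1 : fderiv ℝ (fun q =>
        u₀ q * fderiv ℝ (fun q => (W q).re / (Real.sqrt (P q) * u₀ q)) q (1,0)) p (0,1)
      = fderiv ℝ u₀ p (0,1)
          * fderiv ℝ (fun q => (W q).re / (Real.sqrt (P q) * u₀ q)) p (1,0)
        + u₀ p * fderiv ℝ
            (fun q => fderiv ℝ (fun q => (W q).re / (Real.sqrt (P q) * u₀ q)) q (1,0)) p (0,1) :=
    pd_mul (du0 p hp) dupdx (0,1)
  have ey2 : fderiv ℝ (fun q =>
        Real.sqrt (P q) * (W q).im * fderiv ℝ u₀ q (0,1) / (P q * u₀ q)) p (0,1)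
      = (fderiv ℝ (fun q => Real.sqrt (P q) * (W q).im * fderiv ℝ u₀ q (0,1)) p (0,1)
            * (P p * u₀ p)
          - Real.sqrt (P p) * (W p).im * fderiv ℝ u₀ p (0,1)
            * fderiv ℝ (fun q => P q * u₀ q) p (0,1))
        / (P p * u₀ p) ^ 2 :=
    pd_div dnum2 dPu hPu0 (0,1)
  have ey3 : fderiv ℝ (fun q => Real.sqrt (P q) * (W q).im * fderiv ℝ u₀ q (0,1)) p (0,1)
      = fderiv ℝ (fun q => Real.sqrt (P q) * (W q).im) p (0,1) * fderiv ℝ u₀ p (0,1)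
        + Real.sqrt (P p) * (W p).im * fderiv ℝ (fun q => fderiv ℝ u₀ q (0,1)) p (0,1) :=
    pd_mul (dv p hp) du0pdy (0,1)
  have ey4 : fderiv ℝ (fun q => P q * u₀ q) p (0,1)
      = fderiv ℝ P p (0,1) * u₀ p + P p * fderiv ℝ u₀ p (0,1) :=
    pd_mul (dP p hp) (du0 p hp) (0,1)
  -- Schwarz symmetry for u
  have hsch : fderiv ℝ
        (fun q => fderiv ℝ (fun q => (W q).re / (Real.sqrt (P q) * u₀ q)) q (0,1)) p (1,0)
      = fderiv ℝ
        (fun q => fderiv ℝ (fun q => (W q).re / (Real.sqrt (P q) * u₀ q)) q (1,0)) p (0,1) :=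
    pd_schwarz (cu p hp)
  -- the elliptic equation for u₀, expanded
  have hsolE := hu₀sol p hp
  have hx : pdx (fun q => P q * pdx u₀ q) p
      = fderiv ℝ P p (1,0) * fderiv ℝ u₀ p (1,0)
        + P p * fderiv ℝ (fun q => fderiv ℝ u₀ q (1,0)) p (1,0) :=
    pd_mul (dP p hp) du0pdx (1,0)
  have hy : pdy (fun q => P q * pdy u₀ q) p
      = fderiv ℝ P p (0,1) * fderiv ℝ u₀ p (0,1)
        + P p * fderiv ℝ (fun q => fderiv ℝ u₀ q (0,1)) p (0,1) :=
    pd_mul (dP p hp) du0pdy (0,1)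
  rw [hx, hy] at hsolE
  have hX2 : fderiv ℝ (fun q => fderiv ℝ u₀ q (1,0)) p (1,0)
      = (-(fderiv ℝ P p (1,0) * fderiv ℝ u₀ p (1,0))
          - fderiv ℝ P p (0,1) * fderiv ℝ u₀ p (0,1) - Q p * u₀ p) / P p
        - fderiv ℝ (fun q => fderiv ℝ u₀ q (0,1)) p (0,1) := by
    field_simp [hP0 p hp]
    linear_combination hsolE
  -- final assembly
  have hq1 := hq₁ p hp
  simp only [pdx, pdy] at hq1
  rw [ex0, ex1, ex2, ex3, ex4, ex5, ey0, ey1, ey2, ey3, ey4, hsch,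
    hUx p hp, hUy p hp, hX2, hq1]
  have := hP0 p hp; have := hu0 p hp
  field_simp
  ring
end
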